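/- arXiv:2406.14280 — 2 statements merged into one kernel-verified Lean document; each statement's English description precedes it below -/
import Mathlib

section
/- Let γ = (a, b; c, d) ∈ SL₂(ℤ) with c > 0 and c ≡ 2 (mod 4), and let α, β ∈ {0,1}. Let M be the 2×2 complex matrix M = [[0, i^{ab}], [1, 0]]. Then ε_a^{−1} · (c/a) · M_{αβ} = (1/4) Σ_{δ} (c/δ) ε_δ^{−1} e(α(a−δ̄)/(4c)) e(β(d−δ)/(4c)), where δ runs over the odd residues modulo 4c with δ ≡ d (mod c), δ̄ denotes the inverse of δ modulo 4c, (c/a) and (c/δ) are Jacobi symbols (a is odd since ad − bc = 1 and c is even), ε_x := 1 if x ≡ 1 (mod 4) and i if x ≡ 3 (mod 4), and e(x) := e^{2πix}. -/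
open Complex

/-- `e(x) = e^{2πix}`. -/
noncomputable def eE (x : ℂ) : ℂ := Complex.exp (2 * Real.pi * Complex.I * x)

/-- `ε_d = 1` if `d ≡ 1 (mod 4)`, `ε_d = i` if `d ≡ 3 (mod 4)` (for odd `d : ℕ`). -/
noncomputable def epsN (d : ℕ) : ℂ := if d % 4 = 1 then 1 else Complex.I

/-- `ε_x = 1` if `x ≡ 1 (mod 4)`, `ε_x = i` if `x ≡ 3 (mod 4)` (for odd `x : ℤ`). -/
noncomputable def epsZ (x : ℤ) : ℂ := if x % 4 = 1 then 1 else Complex.I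

lemma I_pow_four' : Complex.I ^ (4:ℤ) = 1 := by
  rw [show (4:ℤ) = ((4:ℕ):ℤ) from rfl, zpow_natCast]
  norm_num [pow_succ, Complex.I_sq]

lemma I_zpow_mod (m : ℤ) : Complex.I ^ m = Complex.I ^ (m % 4) := by
  conv_lhs => rw [← Int.emod_add_mul_ediv m 4, zpow_add₀ Complex.I_ne_zero, zpow_mul]
  rw [I_pow_four', one_zpow, mul_one]

lemma I_zpow_congr {m n : ℤ} (h : m % 4 = n % 4) : Complex.I ^ m = Complex.I ^ n := by
  rw [I_zpow_mod m, I_zpow_mod n, h]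

lemma I_zpow_zero : Complex.I ^ (0:ℤ) = 1 := rfl
lemma I_zpow_one : Complex.I ^ (1:ℤ) = Complex.I := zpow_one _
lemma I_zpow_two : Complex.I ^ (2:ℤ) = -1 := by
  rw [show (2:ℤ) = ((2:ℕ):ℤ) from rfl, zpow_natCast, Complex.I_sq]
lemma I_zpow_three : Complex.I ^ (3:ℤ) = -Complex.I := by
  rw [show (3:ℤ) = ((3:ℕ):ℤ) from rfl, zpow_natCast, pow_succ, Complex.I_sq]; ring

lemma I_zpow_neg_one : Complex.I ^ (-1:ℤ) = -Complex.I := by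
  rw [zpow_neg, zpow_one, Complex.inv_I]
lemma I_zpow_neg_two : Complex.I ^ (-2:ℤ) = -1 := by
  rw [zpow_neg, I_zpow_two]; norm_num
lemma I_zpow_neg_three : Complex.I ^ (-3:ℤ) = Complex.I := by
  rw [zpow_neg, I_zpow_three, inv_neg, Complex.inv_I, neg_neg]

lemma eE_zero : eE 0 = 1 := by simp [eE]

lemma exp_I_quarter : Complex.exp (2 * Real.pi * Complex.I * (1/4)) = Complex.I := by
  have h : (2 * (Real.pi:ℂ) * Complex.I * (1/4)) = (Real.pi:ℂ)/2 * Complex.I := by ring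
  rw [h]
  simpa using Complex.exp_mul_I (x := (Real.pi:ℂ)/2)

lemma eE_eq_I_pow (N : ℕ) (hN : 0 < N) (m j : ℤ) (h : ((4*(N:ℤ))) ∣ (m - j*N)) :
    eE ((m:ℂ)/(4*(N:ℂ))) = Complex.I ^ j := by
  obtain ⟨t, ht⟩ := h
  have hm : (m:ℂ) = j*N + 4*N*t := by
    have h2 : (m:ℤ) = j*N + 4*N*t := by linarith
    exact_mod_cast congrArg (Int.cast : ℤ → ℂ) h2
  have hN' : (N:ℂ) ≠ 0 := Nat.cast_ne_zero.2 hN.ne'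
  have harg : (m:ℂ)/(4*(N:ℂ)) = (j:ℂ)/4 + t := by
    rw [hm]; field_simp
  rw [eE, harg, mul_add, Complex.exp_add]
  have h1 : Complex.exp (2 * Real.pi * Complex.I * (t:ℂ)) = 1 := by
    simpa [mul_comm, mul_assoc, mul_left_comm] using Complex.exp_int_mul_two_pi_mul_I t
  have h2 : Complex.exp (2 * Real.pi * Complex.I * ((j:ℂ)/4)) = Complex.I ^ j := by
    have h3 : (2 * (Real.pi:ℂ) * Complex.I * ((j:ℂ)/4))
        = j * (2 * Real.pi * Complex.I * (1/4)) := by ring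
    rw [h3, Complex.exp_int_mul, exp_I_quarter]
  rw [h1, h2, mul_one]

lemma neg_one_pow_half (m l : ℕ) (hm : m % 2 = 1) (hl : l % 2 = 1) :
    ((-1:ℂ)) ^ (m/2 * (l/2)) = if m % 4 = 3 ∧ l % 4 = 3 then -1 else 1 := by
  split_ifs with h
  · refine Odd.neg_one_pow (Nat.odd_mul.2 ⟨Nat.odd_iff.2 (by omega), Nat.odd_iff.2 (by omega)⟩)
  · refine Even.neg_one_pow ?_
    rcases Nat.even_or_odd (m/2) with he | ho
    · exact Nat.even_mul.2 (Or.inl he)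
    · refine Nat.even_mul.2 (Or.inr (Nat.even_iff.2 ?_))
      rw [Nat.odd_iff] at ho; omega

lemma neg_one_pow_half' (m l : ℕ) (hm : m % 2 = 1) (hl : l % 2 = 1) :
    ((-1:ℤ)) ^ (m/2 * (l/2)) = if m % 4 = 3 ∧ l % 4 = 3 then -1 else 1 := by
  split_ifs with h
  · refine Odd.neg_one_pow (Nat.odd_mul.2 ⟨Nat.odd_iff.2 (by omega), Nat.odd_iff.2 (by omega)⟩)
  · refine Even.neg_one_pow ?_
    rcases Nat.even_or_odd (m/2) with he | ho
    · exact Nat.even_mul.2 (Or.inl he)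
    · refine Nat.even_mul.2 (Or.inr (Nat.even_iff.2 ?_))
      rw [Nat.odd_iff] at ho; omega

set_option maxHeartbeats 2000000 in
lemma signs (n δ c' : ℕ) (k : ℤ) (hn : n % 2 = 1) (hδ : δ % 2 = 1) (hc' : c' % 2 = 1)
    (h8 : ((n:ℤ) * δ) % 8 = (1 + 2*k*c') % 8) :
    (ZMod.χ₈ δ : ℂ) * ((-1:ℂ)) ^ (c'/2 * (δ/2)) * (epsN δ)⁻¹
      = (epsN n)⁻¹ * ((ZMod.χ₈ n : ℂ) * (-1:ℂ) ^ (c'/2 * (n/2))) * Complex.I ^ ((n:ℤ)*k) := by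
  have en8 : ((n:ℤ)) % 8 = ((n % 8 : ℕ):ℤ) := by omega
  have ed8 : ((δ:ℤ)) % 8 = ((δ % 8 : ℕ):ℤ) := by omega
  have ec4 : ((c':ℤ)) % 4 = ((c' % 4 : ℕ):ℤ) := by omega
  have en4 : ((n:ℤ)) % 4 = ((n % 8 % 4 : ℕ):ℤ) := by omega
  have h8' : (((n % 8 : ℕ):ℤ) * ((δ % 8 : ℕ):ℤ)) % 8
      = (1 + 2 * ((k % 4) * ((c' % 4 : ℕ):ℤ) % 4)) % 8 := by
    have e1 : ((n:ℤ) * δ) % 8 = (((n % 8 : ℕ):ℤ) * ((δ % 8 : ℕ):ℤ)) % 8 := by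
      rw [Int.mul_emod, en8, ed8]
    have e2 : (2*k*(c':ℤ)) % 8 = 2 * ((k * c') % 4) := by
      have h := Int.emod_emod_of_dvd (k * c') (by norm_num : (4:ℤ) ∣ 8)
      have h' : (2 * (k * (c':ℤ))) % 8 = 2 * ((k * c') % 4) := by omega
      rw [← h']; ring_nf
    have e3 : (k * (c':ℤ)) % 4 = (k % 4) * ((c' % 4 : ℕ):ℤ) % 4 := by
      rw [Int.mul_emod, ec4]
    rw [← e1, h8]; omega
  rw [ZMod.χ₈_nat_eq_if_mod_eight, ZMod.χ₈_nat_eq_if_mod_eight,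
      neg_one_pow_half c' δ hc' hδ, neg_one_pow_half c' n hc' hn]
  rw [I_zpow_mod, Int.mul_emod, en4]
  unfold epsN
  rw [show δ % 4 = δ % 8 % 4 from (Nat.mod_mod_of_dvd δ (by norm_num)).symm,
      show n % 4 = n % 8 % 4 from (Nat.mod_mod_of_dvd n (by norm_num)).symm,
      hn, hδ]
  have hn8 : n % 8 = 1 ∨ n % 8 = 3 ∨ n % 8 = 5 ∨ n % 8 = 7 := by omega
  have hd8 : δ % 8 = 1 ∨ δ % 8 = 3 ∨ δ % 8 = 5 ∨ δ % 8 = 7 := by omega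
  have hc4 : c' % 4 = 1 ∨ c' % 4 = 3 := by omega
  have hk4 : k % 4 = 0 ∨ k % 4 = 1 ∨ k % 4 = 2 ∨ k % 4 = 3 := by omega
  clear h8 en8 ed8 ec4 en4 hc'
  rcases hn8 with hn8|hn8|hn8|hn8 <;> rcases hd8 with hd8|hd8|hd8|hd8 <;>
    rcases hc4 with hc4|hc4 <;> rcases hk4 with hk4|hk4|hk4|hk4 <;>
      rw [hn8, hd8, hc4, hk4] at h8' ⊢ <;>
      first
        | (exfalso; omega)
        | norm_num [Complex.inv_I, I_zpow_zero, I_zpow_one, I_zpow_two, I_zpow_three]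
lemma lemA_pos (n δ c' : ℕ) (k : ℤ) (hn : n % 2 = 1) (hδ : δ % 2 = 1) (hc' : c' % 2 = 1)
    (h : (8*(c':ℤ)) ∣ ((n:ℤ) * δ - (1 + k*(2*c')))) :
    (jacobiSym ((2*c' : ℕ):ℤ) δ : ℂ) * (epsN δ)⁻¹
      = (epsN n)⁻¹ * (jacobiSym ((2*c' : ℕ):ℤ) n : ℂ) * Complex.I ^ ((n:ℤ)*k) := by
  obtain ⟨t, ht⟩ := h
  have hoc : Odd c' := Nat.odd_iff.2 hc'
  have hoδ : Odd δ := Nat.odd_iff.2 hδ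
  have hon : Odd n := Nat.odd_iff.2 hn
  -- gcd n c' = 1
  have hcopn : Int.gcd (n:ℤ) c' = 1 := by
    rw [← Int.isCoprime_iff_gcd_eq_one]
    exact ⟨δ, -(2*k + 8*t), by push_cast; linarith⟩
  have hJnδ : jacobiSym (δ:ℤ) c' = jacobiSym (n:ℤ) c' := by
    have h1 : jacobiSym ((n:ℤ)*δ) c' = 1 := by
      have : ((n:ℤ)*δ) % c' = 1 % c' := by
        have : (c':ℤ) ∣ ((n:ℤ)*δ - 1) := ⟨2*k + 8*t, by linarith⟩
        exact Int.modEq_iff_dvd.2 (by simpa using (dvd_neg.2 this))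
      rw [jacobiSym.mod_left' this, jacobiSym.one_left]
    have h2 := jacobiSym.mul_left (n:ℤ) (δ:ℤ) c'
    have h3 := jacobiSym.sq_one (a := (n:ℤ)) (b := c') hcopn
    calc jacobiSym (δ:ℤ) c' = (jacobiSym (n:ℤ) c' ^ 2) * jacobiSym (δ:ℤ) c' := by rw [h3]; ring
      _ = jacobiSym (n:ℤ) c' * (jacobiSym (n:ℤ) c' * jacobiSym (δ:ℤ) c') := by ring
      _ = jacobiSym (n:ℤ) c' := by rw [← h2, h1, mul_one]
  have h8 : ((n:ℤ) * δ) % 8 = (1 + 2*k*c') % 8 := by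
    have : (8:ℤ) ∣ ((n:ℤ)*δ - (1 + 2*k*c')) := ⟨c'*t, by push_cast; linarith [ht]⟩
    omega
  have key := signs n δ c' k hn hδ hc' h8
  have expandL : (jacobiSym ((2*c':ℕ):ℤ) δ : ℂ)
      = (ZMod.χ₈ δ : ℂ) * ((-1:ℂ))^(c'/2*(δ/2)) * (jacobiSym (n:ℤ) c' : ℂ) := by
    rw [show ((2*c':ℕ):ℤ) = 2 * (c':ℤ) by push_cast; ring, jacobiSym.mul_left,
      jacobiSym.at_two hoδ, jacobiSym.quadratic_reciprocity hoc hoδ, hJnδ]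
    push_cast
    ring
  have expandR : (jacobiSym ((2*c':ℕ):ℤ) n : ℂ)
      = (ZMod.χ₈ n : ℂ) * ((-1:ℂ))^(c'/2*(n/2)) * (jacobiSym (n:ℤ) c' : ℂ) := by
    rw [show ((2*c':ℕ):ℤ) = 2 * (c':ℤ) by push_cast; ring, jacobiSym.mul_left,
      jacobiSym.at_two hon, jacobiSym.quadratic_reciprocity hoc hon]
    push_cast
    ring
  rw [expandL, expandR]
  linear_combination (jacobiSym (n:ℤ) c' : ℂ) * key

lemma flipJ (c' m : ℕ) (hc' : c' % 2 = 1) (hm : m % 2 = 1) (hlt : m < 8*c') :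
    jacobiSym ((2*c' : ℕ):ℤ) (8*c' - m) = jacobiSym ((2*c' : ℕ):ℤ) m := by
  have hoc : Odd c' := Nat.odd_iff.2 hc'
  have hom : Odd m := Nat.odd_iff.2 hm
  have hy : (8*c' - m) % 2 = 1 := by omega
  have hoy : Odd (8*c' - m) := Nat.odd_iff.2 hy
  have hmodc : ((8*c' - m : ℕ):ℤ) % c' = (-(m:ℤ)) % c' := by
    refine Int.modEq_iff_dvd.2 ⟨-8, ?_⟩
    have : ((8*c' - m : ℕ):ℤ) = 8*c' - m := by push_cast [Nat.cast_sub hlt.le]; ring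
    rw [this]; ring
  have hneg : jacobiSym (-(m:ℤ)) c' = (ZMod.χ₄ c') * jacobiSym (m:ℤ) c' := by
    rw [show (-(m:ℤ)) = -1 * m by ring, jacobiSym.mul_left, jacobiSym.at_neg_one hoc]
  have e1 : jacobiSym ((2*c':ℕ):ℤ) (8*c'-m)
      = (ZMod.χ₈ ((8*c'-m : ℕ))) * ((-1:ℤ))^(c'/2*((8*c'-m)/2)) * ((ZMod.χ₄ c') * jacobiSym (m:ℤ) c') := by
    rw [show ((2*c':ℕ):ℤ) = 2 * (c':ℤ) by push_cast; ring, jacobiSym.mul_left,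
      jacobiSym.at_two hoy, jacobiSym.quadratic_reciprocity hoc hoy,
      jacobiSym.mod_left' hmodc, hneg]
    ring
  have e2 : jacobiSym ((2*c':ℕ):ℤ) m
      = (ZMod.χ₈ m) * ((-1:ℤ))^(c'/2*(m/2)) * jacobiSym (m:ℤ) c' := by
    rw [show ((2*c':ℕ):ℤ) = 2 * (c':ℤ) by push_cast; ring, jacobiSym.mul_left,
      jacobiSym.at_two hom, jacobiSym.quadratic_reciprocity hoc hom]
    ring
  rw [e1, e2]
  have hsign : (ZMod.χ₈ ((8*c'-m : ℕ)) : ℤ) * ((-1:ℤ))^(c'/2*((8*c'-m)/2)) * (ZMod.χ₄ c')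
      = (ZMod.χ₈ m) * ((-1:ℤ))^(c'/2*(m/2)) := by
    rw [ZMod.χ₈_nat_eq_if_mod_eight, ZMod.χ₈_nat_eq_if_mod_eight,
      ZMod.χ₄_nat_eq_if_mod_four,
      neg_one_pow_half' c' _ hc' hy, neg_one_pow_half' c' m hc' hm, hy, hm]
    have hy8 : (8*c'-m) % 8 = 8 - m % 8 := by omega
    have hy4 : (8*c'-m) % 4 = 4 - m % 4 := by omega
    have hc2 : c' % 2 = 1 := hc'
    rw [hy8, hy4]
    have hm8 : m % 8 = 1 ∨ m % 8 = 3 ∨ m % 8 = 5 ∨ m % 8 = 7 := by omega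
    have hc4 : c' % 4 = 1 ∨ c' % 4 = 3 := by omega
    have hm4 : m % 4 = m % 8 % 4 := (Nat.mod_mod_of_dvd m (by norm_num)).symm
    rcases hm8 with h8|h8|h8|h8 <;> rcases hc4 with h4|h4 <;>
      rw [h8, h4, hm4, h8] <;> norm_num [hc']
  linear_combination jacobiSym (m:ℤ) c' * hsign

lemma lemA (a : ℤ) (c' δ : ℕ) (hc' : c' % 2 = 1) (hδ : δ % 2 = 1) (ha : a % 2 = 1) (k : ℤ)
    (h : (8*(c':ℤ)) ∣ (a * δ - (1 + k*(2*c')))) :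
    (jacobiSym ((2*c' : ℕ):ℤ) δ : ℂ) * (epsN δ)⁻¹
      = (epsZ a)⁻¹ * (jacobiSym ((2*c' : ℕ):ℤ) a.natAbs : ℂ) * Complex.I ^ (a*k) := by
  have hc'pos : 0 < c' := Nat.pos_of_ne_zero (by rintro rfl; simp at hc')
  set m : ℕ := (a % (8*c')).toNat with hm
  have hnn : 0 ≤ a % (8*(c':ℤ)) := Int.emod_nonneg a (by positivity)
  have hlt : a % (8*(c':ℤ)) < 8*c' := Int.emod_lt_of_pos a (by positivity)
  have hmz : (m:ℤ) = a % (8*c') := by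
    rw [hm]; push_cast [Int.toNat_of_nonneg hnn]; ring
  have hdvd8 : (8:ℤ) * c' ∣ a - m := by
    rw [hmz]; exact Int.dvd_self_sub_of_emod_eq rfl
  have hm2' : (m:ℤ) % 2 = a % 2 := by
    rw [hmz]; exact Int.emod_emod_of_dvd a ⟨4*c', by ring⟩
  have hm2 : m % 2 = 1 := by omega
  have hm4 : (m:ℤ) % 4 = a % 4 := by
    rw [hmz]; exact Int.emod_emod_of_dvd a ⟨2*c', by ring⟩
  have h' : (8*(c':ℤ)) ∣ ((m:ℤ) * δ - (1 + k*(2*c'))) := by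
    have heq : ((m:ℤ) * δ - (1 + k*(2*c'))) = (a * δ - (1 + k*(2*c'))) + ((m:ℤ) - a) * δ := by
      ring
    rw [heq]
    exact dvd_add h (Dvd.dvd.mul_right (by simpa using hdvd8.neg_right) _)
  have key := lemA_pos m δ c' k hm2 hδ hc' h'
  have heps : epsN m = epsZ a := by
    unfold epsN epsZ
    by_cases h4 : a % 4 = 1
    · rw [if_pos h4, if_pos (by omega)]
    · rw [if_neg h4, if_neg (by omega)]
  have hIpow : Complex.I ^ ((m:ℤ)*k) = Complex.I ^ (a*k) := by
    refine I_zpow_congr ?_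
    conv_lhs => rw [Int.mul_emod, hm4, ← Int.mul_emod]
  have h48 : 4*(2*c') = 8*c' := by ring
  have hJ : jacobiSym ((2*c':ℕ):ℤ) m = jacobiSym ((2*c':ℕ):ℤ) a.natAbs := by
    have hoabs : Odd a.natAbs := by
      rw [Int.natAbs_odd]; exact Int.odd_iff.2 ha
    rw [jacobiSym.mod_right' (2*c') hoabs, h48]
    rcases Int.natAbs_eq a with hpos | hneg
    · have h1 : ((a.natAbs % (8*c') : ℕ) : ℤ) = (m:ℤ) := by
        have h0 : 0 ≤ a := hpos ▸ Int.natCast_nonneg _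
        push_cast
        rw [abs_of_nonneg h0]
        exact hmz.symm
      have : a.natAbs % (8*c') = m := by exact_mod_cast h1
      rw [this]
    · have hcast : ((a.natAbs : ℤ)) = -a := by omega
      have hmpos : 0 < m := by omega
      have hd : (8*(c':ℤ)) ∣ ((8*c' - m) - (-a)) := by
        obtain ⟨u, hu⟩ := hdvd8
        exact ⟨1 + u, by linarith⟩
      have h2 : (-a) % (8*(c':ℤ)) = (8*(c':ℤ) - m) % (8*(c':ℤ)) := Int.modEq_iff_dvd.2 hd
      have h3 : (8*(c':ℤ) - m) % (8*(c':ℤ)) = 8*(c':ℤ) - m :=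
        Int.emod_eq_of_lt (by omega) (by omega)
      have h1 : ((a.natAbs % (8*c') : ℕ) : ℤ) = ((8*c' - m : ℕ) : ℤ) := by
        have h0 : a ≤ 0 := by omega
        push_cast [Nat.cast_sub (by omega : m ≤ 8*c')]
        rw [abs_of_nonpos h0, h2, h3]
      have habs : a.natAbs % (8*c') = 8*c' - m := by exact_mod_cast h1
      rw [habs, flipJ c' m hc' hm2 (by omega)]
  rw [key, heps, hIpow, hJ]
lemma filter_eq (c : ℕ) (hc : 0 < c) (hceven : c % 2 = 0) (d : ℤ) (hd : d % 2 = 1) :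
    ((Finset.range (4*c)).filter
      (fun δ : ℕ => δ % 2 = 1 ∧ ((δ : ZMod c) = ((d:ℤ) : ZMod c))))
    = (Finset.range 4).image (fun j => (d % (c:ℤ)).toNat + j*c) := by
  have hr : (((d % (c:ℤ)).toNat : ℕ) : ℤ) = d % c :=
    Int.toNat_of_nonneg (Int.emod_nonneg d (by positivity))
  set r := (d % (c:ℤ)).toNat with hrdef
  have hrlt : r < c := by
    have := Int.emod_lt_of_pos d (show (0:ℤ) < c by positivity)
    omega
  have h2c : (2:ℤ) ∣ (c:ℕ) := by
    obtain ⟨c₀, rfl⟩ := Nat.dvd_of_mod_eq_zero hceven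
    exact ⟨c₀, by push_cast; ring⟩
  have hrodd : r % 2 = 1 := by
    have h1 : d % (c:ℤ) % 2 = d % 2 := Int.emod_emod_of_dvd d h2c
    omega
  have hrr : (r:ℤ) % c = r := Int.emod_eq_of_lt (by positivity) (by exact_mod_cast hrlt)
  ext e
  simp only [Finset.mem_filter, Finset.mem_range, Finset.mem_image]
  constructor
  · rintro ⟨he4, he2, hzc⟩
    have hmod : (e:ℤ) % c = d % c := by
      have h1 : ((e:ℤ) : ZMod c) = ((d:ℤ) : ZMod c) := by
        rw [Int.cast_natCast]; exact hzc
      exact (ZMod.intCast_eq_intCast_iff _ _ _).1 h1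
    have hme : Int.ModEq c (r:ℤ) e := by unfold Int.ModEq; omega
    obtain ⟨t, ht⟩ := Int.modEq_iff_dvd.1 hme
    have ht0 : 0 ≤ t := by nlinarith [ht]
    have ht4 : t < 4 := by
      by_contra hcon
      push_neg at hcon
      have : (4:ℤ)*c ≤ c * t := by nlinarith
      have he4' : (e:ℤ) < 4*c := by exact_mod_cast he4
      omega
    refine ⟨t.toNat, by omega, ?_⟩
    have : (e:ℤ) = r + (t.toNat : ℤ)*c := by rw [Int.toNat_of_nonneg ht0]; linarith
    exact_mod_cast this.symm
  · rintro ⟨j, hj4, rfl⟩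
    have hjc : j*c ≤ 3*c := Nat.mul_le_mul_right c (by omega)
    refine ⟨by omega, ?_, ?_⟩
    · have : (j*c) % 2 = 0 := by
        have : Even (j*c) := (Nat.even_iff.2 hceven).mul_left j
        exact Nat.even_iff.1 this
      omega
    · have h1 : ((r + j*c : ℕ) : ZMod c) = (r : ZMod c) := by
        push_cast [ZMod.natCast_self]
        ring
      have h2 : ((d:ℤ) : ZMod c) = (((r:ℕ):ℤ) : ZMod c) := by
        refine (ZMod.intCast_eq_intCast_iff _ _ _).2 ?_
        unfold Int.ModEq
        omega
      rw [h1, h2, Int.cast_natCast]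
set_option maxHeartbeats 4000000 in
/-- for `γ = (a,b;c,d) ∈ SL₂(ℤ)` with `c > 0`, `c ≡ 2 (mod 4)`,
`α β ∈ {0,1}`, and `M = [[0, i^{ab}],[1, 0]]`, one has
`ε_a⁻¹ (c/a) M_{αβ}
  = (1/4) ∑_{δ (mod 4c), δ odd, δ ≡ d (mod c)} (c/δ) ε_δ⁻¹ e(α(a-δ̄)/(4c)) e(β(d-δ)/(4c))`,
where `δ̄` is the inverse of `δ` modulo `4c`. -/
theorem weil_rep_entry_c_two_mod_four (a b d : ℤ) (c : ℕ) (hc : 0 < c) (hc4 : c % 4 = 2)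
    (hdet : a * d - b * (c : ℤ) = 1) (α β : Fin 2) :
    (epsZ a)⁻¹ * (jacobiSym (c : ℤ) a.natAbs : ℂ) *
        (!![0, Complex.I ^ (a * b); 1, 0] α β) =
      1 / 4 *
        ∑ δ ∈ (Finset.range (4 * c)).filter
            (fun δ : ℕ => δ % 2 = 1 ∧ ((δ : ZMod c) = ((d : ℤ) : ZMod c))),
          (jacobiSym (c : ℤ) δ : ℂ) * (epsN δ)⁻¹ *
            eE (((α : ℕ) : ℂ) * ((a : ℂ) - ((((δ : ZMod (4 * c))⁻¹ : ZMod (4 * c)).val : ℕ) : ℂ)) /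
              (4 * (c : ℂ))) *
            eE (((β : ℕ) : ℂ) * ((d : ℂ) - (δ : ℂ)) / (4 * (c : ℂ))) := by
  obtain ⟨c', rfl⟩ : ∃ c', c = 2*c' := ⟨c/2, by omega⟩
  have hc' : c' % 2 = 1 := by omega
  have hc'pos : 0 < c' := by omega
  haveI : NeZero (4*(2*c')) := ⟨by omega⟩
  -- parities
  have hodd : Odd (a*d) := by
    have h1 : a * d = 1 + b * ((2*c' : ℕ):ℤ) := by linarith
    have h2 : Even (b * ((2*c' : ℕ):ℤ)) := ⟨b*(c':ℤ), by push_cast; ring⟩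
    rw [h1]
    exact h2.one_add
  have ha : a % 2 = 1 := Int.odd_iff.1 (Int.odd_mul.1 hodd).1
  have hd : d % 2 = 1 := Int.odd_iff.1 (Int.odd_mul.1 hodd).2
  -- the residue r and quotient q
  have hr0 : (((d % ((2*c' : ℕ):ℤ)).toNat : ℕ) : ℤ) = d % ((2*c' : ℕ):ℤ) :=
    Int.toNat_of_nonneg (Int.emod_nonneg d (by positivity))
  set r : ℕ := (d % ((2*c' : ℕ):ℤ)).toNat with hrdef
  set q : ℤ := d / ((2*c' : ℕ):ℤ) with hqdef
  have hdq : d = ((2*c' : ℕ):ℤ) * q + r := by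
    rw [hr0, hqdef]; exact (Int.mul_ediv_add_emod d _).symm
  have hrlt : r < 2*c' := by
    have := Int.emod_lt_of_pos d (show (0:ℤ) < ((2*c':ℕ):ℤ) by positivity)
    omega
  have hδodd : ∀ j : ℕ, (r + j*(2*c')) % 2 = 1 := by
    intro j
    have h1 : d % ((2*c':ℕ):ℤ) % 2 = d % 2 :=
      Int.emod_emod_of_dvd d ⟨(c':ℤ), by push_cast; ring⟩
    have h2 : (j*(2*c')) % 2 = 0 := by
      rw [show j*(2*c') = 2*(j*c') by ring]; omega
    omega
  -- rewrite the sum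
  rw [filter_eq (2*c') (by omega) (by omega) d hd]
  rw [Finset.sum_image (by
    intro x hx y hy hxy
    have h1 : x*(2*c') = y*(2*c') := by simp only at hxy; omega
    exact Nat.eq_of_mul_eq_mul_right (by omega) h1)]
  rw [show (d % ((2*c' : ℕ):ℤ)).toNat = r from hrdef.symm]
  -- exact linear identity  a·δⱼ = 1 + Kⱼ·c
  have hexact : ∀ j : ℕ, a * ((r + j*(2*c') : ℕ):ℤ)
      = 1 + (b - a*q + a*j) * (2*(c':ℤ)) := by
    intro j
    have hdq' : d = 2*(c':ℤ)*q + r := by push_cast at hdq ⊢; linarith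
    have hdet' : a*d - b*(2*(c':ℤ)) = 1 := by push_cast at hdet ⊢; linarith
    push_cast
    linear_combination hdet' + (-a) * hdq'
  -- Jacobi/eps evaluation of each term
  have hterm : ∀ j : ℕ, (jacobiSym ((2*c' : ℕ):ℤ) (r + j*(2*c')) : ℂ) * (epsN (r + j*(2*c')))⁻¹
      = (epsZ a)⁻¹ * (jacobiSym ((2*c' : ℕ):ℤ) a.natAbs : ℂ) * Complex.I ^ (a * (b - a*q + a*j)) := by
    intro j
    refine lemA a c' _ hc' (hδodd j) ha (b - a*q + a*j) ?_
    have h0 : a * ((r + j*(2*c') : ℕ):ℤ) - (1 + (b - a*q + a*j) * (2*(c':ℤ))) = 0 := by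
      have := hexact j; linarith
    rw [h0]
    exact dvd_zero _
  -- the inverse mod 4c
  have hinv : ∀ j : ℕ, (8*(c':ℤ)) ∣
      (a * (1 + (b - a*q + a*j) * (2*(c':ℤ)))
        - ((((r + j*(2*c') : ℕ) : ZMod (4*(2*c')))⁻¹ : ZMod (4*(2*c'))).val : ℤ)) := by
    intro j
    set K : ℤ := b - a*q + a*j with hK
    have h2K : (2:ℤ) ∣ K * (1 + c'*K) := by
      rcases Int.even_or_odd K with ⟨s, hs⟩ | ⟨s, hs⟩
      · exact ⟨s*(1 + c'*K), by rw [hs]; ring⟩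
      · obtain ⟨u, hu⟩ : ∃ u, (c':ℤ) = 2*u+1 := ⟨((c':ℤ)-1)/2, by omega⟩
        exact ⟨K*(u + s + 2*s*u + 1), by rw [hs, hu]; ring⟩
    obtain ⟨w, hw⟩ := h2K
    have hv : ((r + j*(2*c') : ℕ) : ZMod (4*(2*c')))⁻¹
        = ((a * (1 + K * (2*(c':ℤ))) : ℤ) : ZMod (4*(2*c'))) := by
      apply ZMod.inv_eq_of_mul_eq_one
      have hcast : ((r + j*(2*c') : ℕ) : ZMod (4*(2*c'))) * ((a * (1 + K * (2*(c':ℤ))) : ℤ) : ZMod (4*(2*c')))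
          = ((((r + j*(2*c') : ℕ):ℤ) * (a * (1 + K * (2*(c':ℤ)))) : ℤ) : ZMod (4*(2*c'))) := by
        push_cast; ring
      rw [hcast, show (1 : ZMod (4*(2*c'))) = ((1:ℤ) : ZMod (4*(2*c'))) by norm_cast]
      refine (ZMod.intCast_eq_intCast_iff _ _ _).2 ?_
      have hdvd : ((4*(2*c') : ℕ):ℤ) ∣
          ((((r + j*(2*c') : ℕ):ℤ) * (a * (1 + K * (2*(c':ℤ))))) - 1) := by
        refine ⟨w, ?_⟩
        have he := hexact j
        push_cast at he ⊢
        linear_combination (1 + 2*(c':ℤ)*K) * he + 4*(c':ℤ) * hw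
      exact (Int.modEq_iff_dvd.2 hdvd).symm
    set v : ℕ := (((r + j*(2*c') : ℕ) : ZMod (4*(2*c')))⁻¹ : ZMod (4*(2*c'))).val with hvdef
    have hvz : ((v:ℤ) : ZMod (4*(2*c'))) = ((a * (1 + K * (2*(c':ℤ))) : ℤ) : ZMod (4*(2*c'))) := by
      rw [Int.cast_natCast, hvdef, ZMod.natCast_val, ZMod.cast_id]
      exact hv
    have := (ZMod.intCast_eq_intCast_iff _ _ _).1 hvz
    have hdvd2 := Int.ModEq.dvd this
    have h8c : ((4*(2*c') : ℕ):ℤ) = 8*(c':ℤ) := by push_cast; ring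
    rw [h8c] at hdvd2
    exact hdvd2
  -- phase evaluations
  have hphase1 : ∀ j : ℕ,
      eE (((a:ℂ) - (((((r + j*(2*c') : ℕ) : ZMod (4*(2*c')))⁻¹ : ZMod (4*(2*c'))).val : ℕ) : ℂ))
          / (4*((2*c' : ℕ):ℂ)))
        = Complex.I ^ (-(a * (b - a*q + a*j))) := by
    intro j
    have hcast : ((a:ℂ) - (((((r + j*(2*c') : ℕ) : ZMod (4*(2*c')))⁻¹ : ZMod (4*(2*c'))).val : ℕ) : ℂ))
        = (((a - ((((r + j*(2*c') : ℕ) : ZMod (4*(2*c')))⁻¹ : ZMod (4*(2*c'))).val : ℤ)) : ℤ) : ℂ) := by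
      push_cast; ring
    rw [hcast]
    refine eE_eq_I_pow (2*c') (by omega) _ _ ?_
    have h1 := hinv j
    have h2 : ((a:ℤ) - ((((r + j*(2*c') : ℕ) : ZMod (4*(2*c')))⁻¹ : ZMod (4*(2*c'))).val : ℤ))
          - (-(a * (b - a*q + a*j)))*((2*c' : ℕ):ℤ)
        = a * (1 + (b - a*q + a*j) * (2*(c':ℤ)))
          - ((((r + j*(2*c') : ℕ) : ZMod (4*(2*c')))⁻¹ : ZMod (4*(2*c'))).val : ℤ) := by
      push_cast; ring
    rw [h2]
    have h3 : (4*((2*c' : ℕ):ℤ)) = 8*(c':ℤ) := by push_cast; ring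
    rw [h3]
    exact h1
  have hphase2 : ∀ j : ℕ,
      eE (((d:ℂ) - ((r + j*(2*c') : ℕ):ℂ)) / (4*((2*c' : ℕ):ℂ))) = Complex.I ^ (q - j) := by
    intro j
    have hcast : ((d:ℂ) - ((r + j*(2*c') : ℕ):ℂ)) = (((d - (r + j*(2*c') : ℕ) : ℤ)) : ℂ) := by
      push_cast; ring
    rw [hcast]
    refine eE_eq_I_pow (2*c') (by omega) _ _ ⟨0, ?_⟩
    have hdq2 : d = 2*(c':ℤ)*q + (r:ℤ) := by push_cast at hdq ⊢; linarith
    push_cast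
    linear_combination hdq2
  -- power algebra helpers
  have mulI : ∀ m n : ℤ, Complex.I^m * Complex.I^n = Complex.I^(m+n) :=
    fun m n => (zpow_add₀ Complex.I_ne_zero m n).symm
  have hcong : ∀ m n : ℤ, (4:ℤ) ∣ (n - m) → Complex.I^m = Complex.I^n :=
    fun m n h => I_zpow_congr (Int.modEq_iff_dvd.2 h)
  obtain ⟨s, hs⟩ : ∃ s, a*a - 1 = 4*s := by
    obtain ⟨t, ht⟩ : ∃ t, a = 2*t+1 := ⟨a/2, by omega⟩
    exact ⟨t*t+t, by rw [ht]; ring⟩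
  have hKsplit : ∀ j : ℕ, Complex.I ^ (a * (b - a*q + a*j))
      = Complex.I ^ (a*(b-a*q)) * Complex.I ^ (j:ℤ) := by
    intro j
    rw [mulI]
    exact hcong _ _ ⟨-s*j, by linear_combination (-(j:ℤ))*hs⟩
  have hKsplitneg : ∀ j : ℕ, Complex.I ^ (-(a * (b - a*q + a*j)))
      = Complex.I ^ (-(a*(b-a*q))) * Complex.I ^ (-(j:ℤ)) := by
    intro j
    rw [mulI]
    exact hcong _ _ ⟨s*j, by linear_combination ((j:ℤ))*hs⟩
  rw [Finset.sum_range_succ, Finset.sum_range_succ, Finset.sum_range_succ, Finset.sum_range_one]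
  have hprod : ∀ j : ℕ, Complex.I ^ (a*(b-a*q+a*(j:ℤ))) * Complex.I ^ (-(a*(b-a*q+a*(j:ℤ)))) = 1 := by
    intro j
    rw [mulI, show a*(b-a*q+a*(j:ℤ)) + -(a*(b-a*q+a*(j:ℤ))) = 0 by ring]
    exact I_zpow_zero
  have hpair : ∀ j : ℕ, Complex.I ^ (a*(b-a*q+a*(j:ℤ))) * Complex.I ^ (q-(j:ℤ))
      = Complex.I ^ (a*b) := by
    intro j
    rw [mulI]
    exact hcong _ _ ⟨s*(q-(j:ℤ)), by linear_combination (q-(j:ℤ))*hs⟩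
  have htriple : ∀ j : ℕ, Complex.I ^ (a*(b-a*q+a*(j:ℤ)))
      * (Complex.I ^ (-(a*(b-a*q+a*(j:ℤ)))) * Complex.I ^ (q-(j:ℤ)))
      = Complex.I ^ q * Complex.I ^ (-(j:ℤ)) := by
    intro j
    rw [mulI, mulI, show a*(b-a*q+a*(j:ℤ)) + (-(a*(b-a*q+a*(j:ℤ))) + (q-(j:ℤ))) = q + -(j:ℤ) by ring,
      ← mulI]
  have hE0 : ∀ x y : ℂ, eE (0 * x / y) = 1 := by
    intro x y; rw [zero_mul, zero_div, eE_zero]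
  have hphase1s : ∀ j : ℕ,
      eE ((1:ℂ) * ((a:ℂ) - (((((r + j*(2*c') : ℕ) : ZMod (4*(2*c')))⁻¹ : ZMod (4*(2*c'))).val : ℕ) : ℂ))
          / (4*((2*c' : ℕ):ℂ)))
        = Complex.I ^ (-(a * (b - a*q + a*j))) := by
    intro j; rw [one_mul]; exact hphase1 j
  have hphase2s : ∀ j : ℕ,
      eE ((1:ℂ) * ((d:ℂ) - ((r + j*(2*c') : ℕ):ℂ)) / (4*((2*c' : ℕ):ℂ))) = Complex.I ^ (q - j) := by
    intro j; rw [one_mul]; exact hphase2 j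
  have matsimp : True := trivial
  fin_cases α <;> fin_cases β
  · -- α = 0, β = 0
    simp only [Fin.zero_eta, Fin.isValue, Fin.val_zero, Nat.cast_zero, Matrix.cons_val',
      Matrix.cons_val_zero, Matrix.empty_val', Matrix.cons_val_fin_one, Matrix.head_cons,
      Matrix.head_fin_const, hE0, mul_one]
    rw [hterm 0, hterm 1, hterm 2, hterm 3, hKsplit 0, hKsplit 1, hKsplit 2, hKsplit 3]
    norm_num [I_zpow_zero, I_zpow_one, I_zpow_two, I_zpow_three]
  · -- α = 0, β = 1
    simp only [Fin.zero_eta, Fin.mk_one, Fin.isValue, Fin.val_zero, Fin.val_one, Nat.cast_zero,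
      Nat.cast_one, Matrix.cons_val', Matrix.cons_val_zero, Matrix.cons_val_one,
      Matrix.empty_val', Matrix.cons_val_fin_one, Matrix.head_cons, Matrix.head_fin_const,
      hE0, mul_one]
    rw [hterm 0, hterm 1, hterm 2, hterm 3, hphase2s 0, hphase2s 1, hphase2s 2, hphase2s 3]
    simp only [mul_assoc]
    rw [hpair 0, hpair 1, hpair 2, hpair 3,
      show (!![0, Complex.I ^ (a*b); 1, 0] : Matrix (Fin 2) (Fin 2) ℂ) 0 1 = Complex.I ^ (a*b) by
        norm_num]
    ring
  · -- α = 1, β = 0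
    simp only [Fin.zero_eta, Fin.mk_one, Fin.isValue, Fin.val_zero, Fin.val_one, Nat.cast_zero,
      Nat.cast_one, Matrix.cons_val', Matrix.cons_val_zero, Matrix.cons_val_one,
      Matrix.empty_val', Matrix.cons_val_fin_one, Matrix.head_cons, Matrix.head_fin_const,
      hE0, mul_one]
    rw [hterm 0, hterm 1, hterm 2, hterm 3, hphase1s 0, hphase1s 1, hphase1s 2, hphase1s 3]
    simp only [mul_assoc]
    rw [hprod 0, hprod 1, hprod 2, hprod 3,
      show (!![0, Complex.I ^ (a*b); 1, 0] : Matrix (Fin 2) (Fin 2) ℂ) 1 0 = 1 by norm_num]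
    ring
  · -- α = 1, β = 1
    simp only [Fin.mk_one, Fin.isValue, Fin.val_one, Nat.cast_one, Matrix.cons_val',
      Matrix.cons_val_zero, Matrix.cons_val_one, Matrix.empty_val', Matrix.cons_val_fin_one,
      Matrix.head_cons, Matrix.head_fin_const]
    rw [hterm 0, hterm 1, hterm 2, hterm 3, hphase1s 0, hphase1s 1, hphase1s 2, hphase1s 3,
      hphase2s 0, hphase2s 1, hphase2s 2, hphase2s 3]
    simp only [mul_assoc]
    rw [htriple 0, htriple 1, htriple 2, htriple 3,
      show (!![0, Complex.I ^ (a*b); 1, 0] : Matrix (Fin 2) (Fin 2) ℂ) 1 1 = 0 by norm_num]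
    norm_num [I_zpow_zero, I_zpow_neg_one, I_zpow_neg_two, I_zpow_neg_three]
end

section
/- Let ν ≥ 0 be an integer and let a : ℕ → ℂ be any sequence. In the formal power series ring ℂ[[q]] set f := Σ_{d≥0} a(d) q^d and θ := Σ_{j≥0} r₁(j) q^j, where r₁(j) := #{m ∈ ℤ : m² = j}. Define D := q·d/dq on ℂ[[q]], the Rankin–Cohen bracket of weights (3/2, 1/2) by [f, θ]_ν := Σ_{r+s=ν, r,s≥0} (−1)^r · (Γ(3/2+ν) Γ(1/2+ν)) / (s! Γ(3/2+r) r! Γ(1/2+s)) · (D^r f)(D^s θ), and the operator U₄ by (Σ_n b_n q^n)|U₄ := Σ_n b_{4n} q^n. Then for every n ≥ 0, the coefficient of q^n in [f, θ]_ν |U₄ equals C(2ν, ν) · Σ_{r ∈ ℤ, r² ≤ 4n} p_{2ν+2}(r, n) · a(4n − r²). -/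
/-- The operator `D = q d/dq` on formal power series: `(Df)_n = n f_n`. -/
noncomputable def Dq (f : PowerSeries ℂ) : PowerSeries ℂ :=
  PowerSeries.mk fun n => (n : ℂ) * PowerSeries.coeff n f

/-- `r₁(j) = #{m ∈ ℤ : m² = j}`. -/
noncomputable def rOne (j : ℕ) : ℕ := Set.ncard {m : ℤ | m ^ 2 = (j : ℤ)}

open Finset

private lemma sum_pair (N : ℕ) (f : ℕ → ℝ) :
    ∑ k ∈ range (2 * N), f k = ∑ r ∈ range N, (f (2 * r) + f (2 * r + 1)) := by
  induction N with
  | zero => simp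
  | succ N ih =>
      have h : 2 * (N + 1) = 2 * N + 1 + 1 := by ring
      rw [h, sum_range_succ, sum_range_succ, ih, sum_range_succ]
      ring_nf

private lemma odd_binom (ν : ℕ) (t : ℝ) :
    (1 + t) ^ (2 * ν + 1) - (1 - t) ^ (2 * ν + 1)
      = 2 * ∑ r ∈ range (ν + 1), ((2 * ν + 1).choose (2 * r + 1) : ℝ) * t ^ (2 * r + 1) := by
  have h1 : (1 + t) ^ (2 * ν + 1) = ∑ k ∈ range (2 * ν + 2), t ^ k * ((2 * ν + 1).choose k : ℝ) := by
    rw [add_comm 1 t]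
    simpa using add_pow t 1 (2 * ν + 1)
  have h2 : (1 - t) ^ (2 * ν + 1) = ∑ k ∈ range (2 * ν + 2), (-t) ^ k * ((2 * ν + 1).choose k : ℝ) := by
    rw [sub_eq_add_neg, add_comm 1 (-t)]
    simpa using add_pow (-t) 1 (2 * ν + 1)
  rw [h1, h2, ← Finset.sum_sub_distrib]
  have h3 : 2 * ν + 2 = 2 * (ν + 1) := by ring
  rw [h3, sum_pair, Finset.mul_sum]
  refine Finset.sum_congr rfl fun r _ => ?_
  have he : (-t) ^ (2 * r) = t ^ (2 * r) := by
    rw [neg_pow]; simp [pow_mul]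
  have ho : (-t) ^ (2 * r + 1) = -(t ^ (2 * r + 1)) := by
    rw [pow_succ, he, pow_succ]; ring
  rw [he, ho]; ring

private noncomputable def gsum (m : ℕ) (s : ℝ) : ℝ :=
  ∑ j ∈ range (m + 1), ((m - j).choose j : ℝ) * s ^ j

private lemma gsum_rec (m : ℕ) (s : ℝ) :
    gsum (m + 2) s = gsum (m + 1) s + s * gsum m s := by
  unfold gsum
  rw [sum_range_succ' (fun j => ((m + 2 - j).choose j : ℝ) * s ^ j) (m + 2),
      sum_range_succ' (fun j => ((m + 1 - j).choose j : ℝ) * s ^ j) (m + 1),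
      Finset.mul_sum]
  simp only [Nat.choose_zero_right, Nat.cast_one, pow_zero, mul_one]
  rw [sum_range_succ]
  have hz : ((m + 2 - (m + 1 + 1)).choose (m + 1 + 1) : ℝ) * s ^ (m + 1 + 1) = 0 := by
    simp [Nat.choose_eq_zero_of_lt]
  rw [hz, add_zero]
  have : ∀ i ∈ range (m + 1),
      ((m + 2 - (i + 1)).choose (i + 1) : ℝ) * s ^ (i + 1)
        = ((m + 1 - (i + 1)).choose (i + 1) : ℝ) * s ^ (i + 1)
          + s * (((m - i).choose i : ℝ) * s ^ i) := by
    intro i hi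
    have hi' : i ≤ m := by simpa [Nat.lt_succ_iff] using hi
    have h1 : m + 2 - (i + 1) = (m - i) + 1 := by omega
    have h2 : m + 1 - (i + 1) = m - i := by omega
    rw [h1, h2, Nat.choose_succ_succ (m - i) i]
    push_cast
    ring
  rw [Finset.sum_congr rfl this, Finset.sum_add_distrib]
  ring

private lemma gsum_closed : ∀ (m : ℕ) (t : ℝ),
    2 * t * (2 ^ m * gsum m ((t ^ 2 - 1) / 4)) = (1 + t) ^ (m + 1) - (1 - t) ^ (m + 1)
  | 0, t => by simp [gsum]; ring
  | 1, t => by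
      simp [gsum, sum_range_succ]
      ring
  | (m + 2), t => by
      have h1 := gsum_closed (m + 1) t
      have h0 := gsum_closed m t
      rw [gsum_rec]
      linear_combination 2 * h1 + (t ^ 2 - 1) * h0

private lemma coeff_of_sum (N : ℕ) (b : ℕ → ℝ) (j : ℕ) (hj : j < N) :
    (∑ i ∈ range N, Polynomial.C (b i) * Polynomial.X ^ i).coeff j = b j := by
  rw [Polynomial.finset_sum_coeff]
  simp only [Polynomial.coeff_C_mul, Polynomial.coeff_X_pow]
  rw [Finset.sum_eq_single j]
  · simp
  · intro i _ hne; simp [Ne.symm hne]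
  · intro h; exact absurd (Finset.mem_range.mpr hj) h

private lemma keyNat (ν j : ℕ) (hj : j ≤ ν) :
    ∑ r ∈ Icc j ν, r.choose j * ((2 * ν + 1).choose (2 * r + 1))
      = 4 ^ (ν - j) * (2 * ν - j).choose j := by
  set P : Polynomial ℝ := ∑ i ∈ range (ν + 1),
    Polynomial.C ((4 : ℝ) ^ i * ∑ r ∈ Icc i ν,
      ((r.choose i * ((2 * ν + 1).choose (2 * r + 1)) : ℕ) : ℝ)) * Polynomial.X ^ i with hP
  set Q : Polynomial ℝ := ∑ i ∈ range (ν + 1),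
    Polynomial.C ((4 : ℝ) ^ ν * (((2 * ν - i).choose i : ℕ) : ℝ)) * Polynomial.X ^ i with hQ
  have hPQ : P = Q := by
    apply Polynomial.eq_of_infinite_eval_eq
    apply Set.Infinite.mono _ (Set.Ioi_infinite (0 : ℝ))
    intro s hs
    have hs' : (0 : ℝ) < s := hs
    have h14 : (0 : ℝ) < 1 + 4 * s := by linarith
    set t : ℝ := Real.sqrt (1 + 4 * s) with ht
    have ht2 : t ^ 2 = 1 + 4 * s := Real.sq_sqrt h14.le
    have htpos : 0 < t := Real.sqrt_pos.mpr h14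
    have hteval : (t ^ 2 - 1) / 4 = s := by rw [ht2]; ring
    -- closed form evaluations
    have hmain := gsum_closed (2 * ν) t
    rw [hteval, odd_binom ν t] at hmain
    -- gsum truncation
    have htrunc : gsum (2 * ν) s = ∑ i ∈ range (ν + 1), (((2 * ν - i).choose i : ℕ) : ℝ) * s ^ i := by
      unfold gsum
      rw [← Finset.sum_subset (Finset.range_subset_range.mpr (by omega : ν + 1 ≤ 2 * ν + 1))]
      intro i hi hni
      have : 2 * ν - i < i := by
        simp only [Finset.mem_range, not_lt] at hi hni; omega
      simp [Nat.choose_eq_zero_of_lt this]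
    -- RHS of hmain as 2*t*(...)
    have hodd : ∑ r ∈ range (ν + 1), ((2 * ν + 1).choose (2 * r + 1) : ℝ) * t ^ (2 * r + 1)
        = t * ∑ r ∈ range (ν + 1), ((2 * ν + 1).choose (2 * r + 1) : ℝ) * (1 + 4 * s) ^ r := by
      rw [Finset.mul_sum]
      refine Finset.sum_congr rfl fun r _ => ?_
      rw [pow_succ, pow_mul, ht2]; ring
    rw [hodd] at hmain
    have hcancel : (2 : ℝ) ^ (2 * ν) * gsum (2 * ν) s
        = ∑ r ∈ range (ν + 1), ((2 * ν + 1).choose (2 * r + 1) : ℝ) * (1 + 4 * s) ^ r := by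
      have h2t : (2 * t : ℝ) ≠ 0 := by positivity
      apply mul_left_cancel₀ h2t
      rw [hmain]; ring
    -- eval P
    have hevalP : P.eval s = ∑ r ∈ range (ν + 1),
        ((2 * ν + 1).choose (2 * r + 1) : ℝ) * (1 + 4 * s) ^ r := by
      rw [hP]
      simp only [Polynomial.eval_finset_sum, Polynomial.eval_mul, Polynomial.eval_C,
        Polynomial.eval_pow, Polynomial.eval_X]
      have hswap : ∑ i ∈ range (ν + 1), (4 : ℝ) ^ i *
            (∑ r ∈ Icc i ν, ((r.choose i * ((2 * ν + 1).choose (2 * r + 1)) : ℕ) : ℝ)) * s ^ i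
          = ∑ i ∈ range (ν + 1), ∑ r ∈ Icc i ν,
              ((r.choose i : ℝ) * ((2 * ν + 1).choose (2 * r + 1) : ℝ)) * ((4 * s) ^ i) := by
        refine Finset.sum_congr rfl fun i _ => ?_
        rw [mul_right_comm, Finset.mul_sum]
        refine Finset.sum_congr rfl fun r _ => ?_
        push_cast
        rw [mul_pow]
        ring
      rw [hswap]
      rw [Finset.sum_comm' (s' := fun r => range (r + 1)) (t' := range (ν + 1))
        (by intro x y; simp only [Finset.mem_range, Finset.mem_Icc]; omega)]
      refine Finset.sum_congr rfl fun r hr => ?_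
      rw [add_comm (1 : ℝ) (4 * s), add_pow (4 * s) 1 r, Finset.mul_sum]
      refine Finset.sum_congr rfl fun i _ => ?_
      ring
    -- eval Q
    have hevalQ : Q.eval s = (2 : ℝ) ^ (2 * ν) * gsum (2 * ν) s := by
      rw [hQ, htrunc]
      simp only [Polynomial.eval_finset_sum, Polynomial.eval_mul, Polynomial.eval_C,
        Polynomial.eval_pow, Polynomial.eval_X]
      rw [Finset.mul_sum]
      refine Finset.sum_congr rfl fun i _ => ?_
      rw [show (2 : ℝ) ^ (2 * ν) = 4 ^ ν by rw [pow_mul]; norm_num]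
      ring
    show P.eval s = Q.eval s
    rw [hevalP, hevalQ, hcancel]
  -- extract coefficient j
  have hc := congrArg (fun p => Polynomial.coeff p j) hPQ
  simp only [hP, hQ] at hc
  rw [coeff_of_sum _ _ j (by omega), coeff_of_sum _ _ j (by omega)] at hc
  have h4j : (4 : ℝ) ^ j ≠ 0 := by positivity
  have hsplit : (4 : ℝ) ^ ν = 4 ^ j * 4 ^ (ν - j) := by
    rw [← pow_add]; congr 1; omega
  rw [hsplit, mul_assoc] at hc
  have hc2 := mul_left_cancel₀ h4j hc
  have : ((∑ r ∈ Icc j ν, (r.choose j * ((2 * ν + 1).choose (2 * r + 1)) : ℕ) : ℕ) : ℝ)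
      = ((4 ^ (ν - j) * (2 * ν - j).choose j : ℕ) : ℝ) := by
    push_cast
    rw [← hc2]
    push_cast
    ring
  exact_mod_cast this

private lemma gamma_nat_half (k : ℕ) :
    Real.Gamma ((k : ℝ) + 1 / 2) = Real.sqrt Real.pi * (2 * k).factorial / (4 ^ k * k.factorial) := by
  induction k with
  | zero => simpa using Real.Gamma_one_half_eq
  | succ k ih =>
      have h : ((k + 1 : ℕ) : ℝ) + 1 / 2 = ((k : ℝ) + 1 / 2) + 1 := by push_cast; ring
      rw [h, Real.Gamma_add_one (by positivity), ih]
      have hf : ((2 * (k + 1)).factorial : ℝ)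
          = (2 * k + 2) * ((2 * k + 1) * (2 * k).factorial) := by
        have : 2 * (k + 1) = (2 * k + 1) + 1 := by omega
        rw [this, Nat.factorial_succ, Nat.factorial_succ]
        push_cast; ring
      rw [hf, Nat.factorial_succ]
      have h1 : (k.factorial : ℝ) ≠ 0 := Nat.cast_ne_zero.mpr k.factorial_ne_zero
      have h2 : (4 : ℝ) ^ k ≠ 0 := by positivity
      field_simp
      push_cast
      ring

private lemma coeff_eq (ν r : ℕ) (hr : r ≤ ν) :
    (-1 : ℝ) ^ r * (Real.Gamma (3 / 2 + ν) * Real.Gamma (1 / 2 + ν)) /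
        ((Nat.factorial (ν - r) : ℝ) * Real.Gamma (3 / 2 + r) * (Nat.factorial r : ℝ) *
          Real.Gamma (1 / 2 + ((ν - r : ℕ) : ℝ)))
      = (-1) ^ r * ((2 * ν).choose ν * ((2 * ν + 1).choose (2 * r + 1))) / 4 ^ ν := by
  have g1 : Real.Gamma (3 / 2 + ν) = Real.sqrt Real.pi * (2 * (ν + 1)).factorial
      / (4 ^ (ν + 1) * (ν + 1).factorial) := by
    rw [show (3 / 2 + (ν : ℝ)) = ((ν + 1 : ℕ) : ℝ) + 1 / 2 by push_cast; ring, gamma_nat_half]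
  have g2 : Real.Gamma (1 / 2 + ν) = Real.sqrt Real.pi * (2 * ν).factorial
      / (4 ^ ν * ν.factorial) := by
    rw [show (1 / 2 + (ν : ℝ)) = ((ν : ℕ) : ℝ) + 1 / 2 by ring, gamma_nat_half]
  have g3 : Real.Gamma (3 / 2 + r) = Real.sqrt Real.pi * (2 * (r + 1)).factorial
      / (4 ^ (r + 1) * (r + 1).factorial) := by
    rw [show (3 / 2 + (r : ℝ)) = ((r + 1 : ℕ) : ℝ) + 1 / 2 by push_cast; ring, gamma_nat_half]
  have g4 : Real.Gamma (1 / 2 + ((ν - r : ℕ) : ℝ)) = Real.sqrt Real.pi * (2 * (ν - r)).factorial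
      / (4 ^ (ν - r) * (ν - r).factorial) := by
    rw [show (1 / 2 + ((ν - r : ℕ) : ℝ)) = ((ν - r : ℕ) : ℝ) + 1 / 2 by ring,
      gamma_nat_half]
  rw [g1, g2, g3, g4]
  rw [Nat.cast_choose ℝ (by omega : ν ≤ 2 * ν),
      Nat.cast_choose ℝ (by omega : 2 * r + 1 ≤ 2 * ν + 1)]
  rw [show 2 * ν - ν = ν by omega, show 2 * ν + 1 - (2 * r + 1) = 2 * (ν - r) by omega]
  have hf1 : ((2 * (ν + 1)).factorial : ℝ)
      = (2 * ν + 2) * ((2 * ν + 1).factorial : ℝ) := by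
    rw [show 2 * (ν + 1) = (2 * ν + 1) + 1 by omega, Nat.factorial_succ]; push_cast; ring
  have hf2 : ((2 * (r + 1)).factorial : ℝ)
      = (2 * r + 2) * ((2 * r + 1).factorial : ℝ) := by
    rw [show 2 * (r + 1) = (2 * r + 1) + 1 by omega, Nat.factorial_succ]; push_cast; ring
  have hf3 : (((ν + 1)).factorial : ℝ) = (ν + 1) * (ν.factorial : ℝ) := by
    rw [Nat.factorial_succ]; push_cast; ring
  have hf4 : (((2 * ν + 1)).factorial : ℝ) = (2 * ν + 1) * ((2 * ν).factorial : ℝ) := by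
    rw [Nat.factorial_succ]; push_cast; ring
  have hf5 : (((r + 1)).factorial : ℝ) = (r + 1) * (r.factorial : ℝ) := by
    rw [Nat.factorial_succ]; push_cast; ring
  rw [hf1, hf2, hf3, hf4, hf5]
  rw [pow_succ (4 : ℝ) ν, pow_succ (4 : ℝ) r,
    show (4 : ℝ) ^ ν = 4 ^ (ν - r) * 4 ^ r by rw [← pow_add]; congr 1; omega]
  have hsp : Real.sqrt Real.pi ≠ 0 := by positivity
  have ne1 : ((2 * ν).factorial : ℝ) ≠ 0 := Nat.cast_ne_zero.mpr (Nat.factorial_ne_zero _)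
  have ne2 : (ν.factorial : ℝ) ≠ 0 := Nat.cast_ne_zero.mpr (Nat.factorial_ne_zero _)
  have ne3 : ((2 * r + 1).factorial : ℝ) ≠ 0 := Nat.cast_ne_zero.mpr (Nat.factorial_ne_zero _)
  have ne4 : ((2 * (ν - r)).factorial : ℝ) ≠ 0 := Nat.cast_ne_zero.mpr (Nat.factorial_ne_zero _)
  have ne5 : ((ν - r).factorial : ℝ) ≠ 0 := Nat.cast_ne_zero.mpr (Nat.factorial_ne_zero _)
  have ne6 : (r.factorial : ℝ) ≠ 0 := Nat.cast_ne_zero.mpr (Nat.factorial_ne_zero _)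
  have ne7 : (4 : ℝ) ^ (ν - r) ≠ 0 := by positivity
  have ne8 : (4 : ℝ) ^ r ≠ 0 := by positivity
  have ne9 : ((2 : ℝ) * ν + 1) ≠ 0 := by positivity
  have ne10 : ((ν : ℝ) + 1) ≠ 0 := by positivity
  field_simp

private lemma scalar (ν n : ℕ) (X : ℂ) :
    ∑ r ∈ range (ν + 1),
        ((-1 : ℂ) ^ r * (((2 * ν).choose ν : ℂ) * ((2 * ν + 1).choose (2 * r + 1) : ℂ)) / 4 ^ ν) *
          ((4 * (n : ℂ)) - X) ^ r * X ^ (ν - r)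
      = ((2 * ν).choose ν : ℂ) *
          ∑ j ∈ range (ν + 1),
            (-1 : ℂ) ^ j * ((2 * ν - j).choose j : ℂ) * (n : ℂ) ^ j * X ^ (ν - j) := by
  have step1 : ∀ r ∈ range (ν + 1),
      ((-1 : ℂ) ^ r * (((2 * ν).choose ν : ℂ) * ((2 * ν + 1).choose (2 * r + 1) : ℂ)) / 4 ^ ν) *
          ((4 * (n : ℂ)) - X) ^ r * X ^ (ν - r)
        = ∑ m ∈ range (r + 1),
            (((2 * ν).choose ν : ℂ) / 4 ^ ν * ((-1) ^ m * 4 ^ m * (n : ℂ) ^ m * X ^ (ν - m)))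
              * ((r.choose m * ((2 * ν + 1).choose (2 * r + 1)) : ℕ) : ℂ) := by
    intro r hr
    have hrν : r ≤ ν := by simpa [Nat.lt_succ_iff] using hr
    rw [sub_eq_add_neg, add_pow]
    rw [Finset.mul_sum, Finset.sum_mul]
    refine Finset.sum_congr rfl fun m hm => ?_
    have hmr : m ≤ r := by simpa [Nat.lt_succ_iff] using hm
    have hneg : (-X) ^ (r - m) = (-1 : ℂ) ^ (r - m) * X ^ (r - m) := by
      rw [neg_pow]
    have hsign : (-1 : ℂ) ^ r * (-1) ^ (r - m) = (-1) ^ m * ((-1) ^ (r - m)) ^ 2 := by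
      have h : r + (r - m) = m + (r - m) * 2 := by omega
      calc (-1 : ℂ) ^ r * (-1) ^ (r - m) = (-1) ^ (r + (r - m)) := (pow_add _ _ _).symm
        _ = (-1) ^ (m + (r - m) * 2) := by rw [h]
        _ = (-1) ^ m * ((-1) ^ (r - m)) ^ 2 := by rw [pow_add, pow_mul]
    have hsq : ((-1 : ℂ) ^ (r - m)) ^ 2 = 1 := by
      rw [← pow_mul, mul_comm, pow_mul]
      norm_num
    have hX : X ^ (r - m) * X ^ (ν - r) = X ^ (ν - m) := by
      rw [← pow_add]
      congr 1
      omega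
    have h4 : ((4 : ℂ) * n) ^ m = 4 ^ m * (n : ℂ) ^ m := mul_pow _ _ _
    push_cast
    rw [hneg, h4]
    calc (-1 : ℂ) ^ r * ((2 * ν).choose ν * ((2 * ν + 1).choose (2 * r + 1) : ℂ)) / 4 ^ ν *
            (4 ^ m * (n : ℂ) ^ m * ((-1) ^ (r - m) * X ^ (r - m)) * (r.choose m : ℂ)) *
            X ^ (ν - r)
        = ((-1 : ℂ) ^ r * (-1) ^ (r - m)) * ((2 * ν).choose ν * ((2 * ν + 1).choose (2 * r + 1) : ℂ)) / 4 ^ ν *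
            (4 ^ m * (n : ℂ) ^ m * (r.choose m : ℂ)) * (X ^ (r - m) * X ^ (ν - r)) := by ring
      _ = (((2 * ν).choose ν : ℂ) / 4 ^ ν * ((-1) ^ m * 4 ^ m * (n : ℂ) ^ m * X ^ (ν - m)))
            * ((r.choose m : ℂ) * ((2 * ν + 1).choose (2 * r + 1) : ℂ)) := by
          rw [hsign, hsq, hX]
          ring
  rw [Finset.sum_congr rfl step1]
  rw [Finset.sum_comm' (s' := fun m => Icc m ν) (t' := range (ν + 1))
    (by intro x y; simp only [Finset.mem_range, Finset.mem_Icc]; omega)]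
  rw [Finset.mul_sum]
  refine Finset.sum_congr rfl fun m hm => ?_
  have hmν : m ≤ ν := by simpa [Nat.lt_succ_iff] using hm
  rw [← Finset.mul_sum, ← Nat.cast_sum, keyNat ν m hmν]
  have h4 : (4 : ℂ) ^ ν = 4 ^ (ν - m) * 4 ^ m := by rw [← pow_add]; congr 1; omega
  have h4ne : (4 : ℂ) ^ (ν - m) ≠ 0 := pow_ne_zero _ (by norm_num)
  have h4ne' : (4 : ℂ) ^ m ≠ 0 := pow_ne_zero _ (by norm_num)
  rw [h4]
  push_cast
  field_simp

private lemma coeff_Dq_iter (r k : ℕ) (f : PowerSeries ℂ) :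
    PowerSeries.coeff k (Dq^[r] f) = (k : ℂ) ^ r * PowerSeries.coeff k f := by
  induction r with
  | zero => simp
  | succ r ih =>
      rw [Function.iterate_succ_apply', Dq, PowerSeries.coeff_mk, ih, pow_succ]
      ring

private lemma rOne_card (n t : ℕ) (ht : t ≤ 4 * n) :
    (rOne t : ℂ) = (((Finset.Icc (-(4 * (n : ℤ))) (4 * (n : ℤ))).filter
        (fun x : ℤ => x ^ 2 ≤ 4 * (n : ℤ))).filter (fun x : ℤ => x.natAbs ^ 2 = t)).card := by
  congr 1
  rw [rOne, ← Set.ncard_coe_finset]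
  congr 1
  ext m
  simp only [Set.mem_setOf_eq, Finset.coe_filter, Finset.mem_filter, Finset.mem_Icc]
  constructor
  · intro h
    have habs : (m.natAbs : ℤ) ^ 2 = (t : ℤ) := by rw [Int.natAbs_sq]; exact h
    have habs' : m.natAbs ^ 2 = t := by exact_mod_cast habs
    have hle : m ^ 2 ≤ 4 * (n : ℤ) := by rw [h]; exact_mod_cast ht
    refine ⟨⟨⟨?_, ?_⟩, hle⟩, habs'⟩
    · nlinarith [sq_nonneg (m + 1)]
    · nlinarith [sq_nonneg (m - 1)]
  · rintro ⟨-, habs⟩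
    have : ((m.natAbs ^ 2 : ℕ) : ℤ) = (t : ℤ) := by exact_mod_cast habs
    rw [← this]
    push_cast
    rw [sq_abs]

/-- for `ν ≥ 0`, any sequence `a : ℕ → ℂ`, `f = ∑ a(d) q^d`,
`θ = ∑ r₁(j) q^j`, the Rankin--Cohen bracket
`[f,θ]_ν = ∑_{r+s=ν} (-1)^r Γ(3/2+ν)Γ(1/2+ν)/(s! Γ(3/2+r) r! Γ(1/2+s)) (D^r f)(D^s θ)`
satisfies: the coefficient of `q^n` in `[f,θ]_ν | U₄` (i.e. the coefficient of `q^{4n}`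
in `[f,θ]_ν`) equals `C(2ν,ν) ∑_{r ∈ ℤ, r² ≤ 4n} p_{2ν+2}(r,n) a(4n - r²)`, where
`p_{2ν+2}(r,n) = ∑_{j=0}^{ν} (-1)^j C(2ν-j,j) n^j r^{2ν-2j}`. -/
theorem rankin_cohen_bracket_U4_coeff (ν : ℕ) (a : ℕ → ℂ) (n : ℕ) :
    PowerSeries.coeff (4 * n)
        (∑ r ∈ Finset.range (ν + 1),
          PowerSeries.C (R := ℂ)
              ((((-1 : ℝ) ^ r * (Real.Gamma (3 / 2 + ν) * Real.Gamma (1 / 2 + ν)) /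
                ((Nat.factorial (ν - r) : ℝ) * Real.Gamma (3 / 2 + r) *
                  (Nat.factorial r : ℝ) * Real.Gamma (1 / 2 + ((ν - r : ℕ) : ℝ)))) : ℝ) : ℂ) *
            (Dq^[r] (PowerSeries.mk a)) *
            (Dq^[ν - r] (PowerSeries.mk fun j => (rOne j : ℂ)))) =
      (Nat.choose (2 * ν) ν : ℂ) *
        ∑ x ∈ (Finset.Icc (-(4 * (n : ℤ))) (4 * (n : ℤ))).filter
            (fun x : ℤ => x ^ 2 ≤ 4 * (n : ℤ)),
          (∑ j ∈ Finset.range (ν + 1),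
              (-1 : ℂ) ^ j * (Nat.choose (2 * ν - j) j : ℂ) * (n : ℂ) ^ j *
                (x : ℂ) ^ (2 * ν - 2 * j)) *
            a (4 * n - x.natAbs ^ 2) := by
  classical
  set c : ℕ → ℂ := fun r => (-1 : ℂ) ^ r *
    (((2 * ν).choose ν : ℂ) * ((2 * ν + 1).choose (2 * r + 1) : ℂ)) / 4 ^ ν with hc
  set S : Finset ℤ := (Finset.Icc (-(4 * (n : ℤ))) (4 * (n : ℤ))).filter
    (fun x : ℤ => x ^ 2 ≤ 4 * (n : ℤ)) with hS
  set W : ℕ → ℂ := fun t => a (4 * n - t) *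
    ∑ r ∈ range (ν + 1), c r * ((4 * n - t : ℕ) : ℂ) ^ r * ((t : ℕ) : ℂ) ^ (ν - r) with hW
  -- Step 1
  have step1 : PowerSeries.coeff (4 * n)
        (∑ r ∈ Finset.range (ν + 1),
          PowerSeries.C (R := ℂ)
              ((((-1 : ℝ) ^ r * (Real.Gamma (3 / 2 + ν) * Real.Gamma (1 / 2 + ν)) /
                ((Nat.factorial (ν - r) : ℝ) * Real.Gamma (3 / 2 + r) *
                  (Nat.factorial r : ℝ) * Real.Gamma (1 / 2 + ((ν - r : ℕ) : ℝ)))) : ℝ) : ℂ) *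
            (Dq^[r] (PowerSeries.mk a)) *
            (Dq^[ν - r] (PowerSeries.mk fun j => (rOne j : ℂ))))
      = ∑ r ∈ range (ν + 1), ∑ p ∈ Finset.HasAntidiagonal.antidiagonal (4 * n),
          c r * (((p.1 : ℕ) : ℂ) ^ r * a p.1) * (((p.2 : ℕ) : ℂ) ^ (ν - r) * (rOne p.2 : ℂ)) := by
    rw [map_sum]
    refine Finset.sum_congr rfl fun r hr => ?_
    have hrν : r ≤ ν := by simpa [Nat.lt_succ_iff] using hr
    rw [mul_assoc, PowerSeries.coeff_C_mul, PowerSeries.coeff_mul, Finset.mul_sum]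
    refine Finset.sum_congr rfl fun p _ => ?_
    rw [coeff_Dq_iter, coeff_Dq_iter, PowerSeries.coeff_mk, PowerSeries.coeff_mk]
    rw [coeff_eq ν r hrν]
    push_cast
    ring
  rw [step1, Finset.sum_comm]
  -- Step 2: antidiagonal to range, indexed by second coordinate
  have step2 : ∑ p ∈ Finset.HasAntidiagonal.antidiagonal (4 * n), ∑ r ∈ range (ν + 1),
        c r * (((p.1 : ℕ) : ℂ) ^ r * a p.1) * (((p.2 : ℕ) : ℂ) ^ (ν - r) * (rOne p.2 : ℂ))
      = ∑ t ∈ range (4 * n + 1), (rOne t : ℂ) * W t := by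
    rw [Finset.Nat.sum_antidiagonal_eq_sum_range_succ (fun i j => ∑ r ∈ range (ν + 1),
        c r * ((i : ℂ) ^ r * a i) * ((j : ℂ) ^ (ν - r) * (rOne j : ℂ)))]
    rw [← Finset.sum_range_reflect]
    refine Finset.sum_congr rfl fun t htm => ?_
    have ht : t ≤ 4 * n := by simpa [Nat.lt_succ_iff] using htm
    have e1 : 4 * n + 1 - 1 - t = 4 * n - t := by omega
    have e2 : 4 * n - (4 * n - t) = t := by omega
    rw [e1, e2]
    simp only [hW]
    rw [Finset.mul_sum, Finset.mul_sum]
    refine Finset.sum_congr rfl fun r _ => ?_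
    ring
  rw [step2]
  -- Step 3: fiberwise
  have maps : ∀ x ∈ S, x.natAbs ^ 2 ∈ range (4 * n + 1) := by
    intro x hx
    rw [hS, Finset.mem_filter] at hx
    have h2 : ((x.natAbs ^ 2 : ℕ) : ℤ) ≤ 4 * (n : ℤ) := by
      push_cast
      rw [sq_abs]
      exact hx.2
    rw [Finset.mem_range, Nat.lt_succ_iff]
    exact_mod_cast h2
  have step3 : ∑ t ∈ range (4 * n + 1), (rOne t : ℂ) * W t
      = ∑ x ∈ S, W (x.natAbs ^ 2) := by
    rw [← Finset.sum_fiberwise_of_maps_to maps (fun x => W (x.natAbs ^ 2))]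
    refine Finset.sum_congr rfl fun t htm => ?_
    have ht : t ≤ 4 * n := by simpa [Nat.lt_succ_iff] using htm
    have : ∑ x ∈ S.filter (fun x : ℤ => x.natAbs ^ 2 = t), W (x.natAbs ^ 2)
        = ∑ x ∈ S.filter (fun x : ℤ => x.natAbs ^ 2 = t), W t := by
      refine Finset.sum_congr rfl fun x hx => ?_
      rw [Finset.mem_filter] at hx
      rw [hx.2]
    rw [this, Finset.sum_const, nsmul_eq_mul, rOne_card n t ht, hS]
  rw [step3]
  -- Step 4: apply scalar identity per x
  have step4 : ∀ x ∈ S, W (x.natAbs ^ 2)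
      = ((2 * ν).choose ν : ℂ) *
          ((∑ j ∈ Finset.range (ν + 1),
              (-1 : ℂ) ^ j * ((2 * ν - j).choose j : ℂ) * (n : ℂ) ^ j *
                (x : ℂ) ^ (2 * ν - 2 * j)) *
            a (4 * n - x.natAbs ^ 2)) := by
    intro x hx
    have hle : x.natAbs ^ 2 ≤ 4 * n := by
      have := maps x hx
      rw [Finset.mem_range, Nat.lt_succ_iff] at this
      exact this
    have hX : ((x.natAbs ^ 2 : ℕ) : ℂ) = (x : ℂ) ^ 2 := by
      have h : ((x.natAbs ^ 2 : ℕ) : ℤ) = x ^ 2 := by push_cast; rw [sq_abs]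
      calc ((x.natAbs ^ 2 : ℕ) : ℂ) = (((x.natAbs ^ 2 : ℕ) : ℤ) : ℂ) := by norm_cast
        _ = ((x ^ 2 : ℤ) : ℂ) := by rw [h]
        _ = (x : ℂ) ^ 2 := by push_cast; ring
    have hsub : ((4 * n - x.natAbs ^ 2 : ℕ) : ℂ) = 4 * (n : ℂ) - ((x.natAbs ^ 2 : ℕ) : ℂ) := by
      rw [Nat.cast_sub hle]
      push_cast
      ring
    rw [hW]
    simp only
    rw [show (∑ r ∈ range (ν + 1), c r * ((4 * n - x.natAbs ^ 2 : ℕ) : ℂ) ^ r *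
          ((x.natAbs ^ 2 : ℕ) : ℂ) ^ (ν - r))
        = ∑ r ∈ range (ν + 1), c r * ((4 * (n : ℂ)) - ((x.natAbs ^ 2 : ℕ) : ℂ)) ^ r *
          ((x.natAbs ^ 2 : ℕ) : ℂ) ^ (ν - r) from by
      refine Finset.sum_congr rfl fun r _ => ?_
      rw [hsub]]
    rw [hc]
    rw [scalar ν n (((x.natAbs ^ 2 : ℕ) : ℂ))]
    rw [show (∑ j ∈ range (ν + 1), (-1 : ℂ) ^ j * ((2 * ν - j).choose j : ℂ) * (n : ℂ) ^ j *
          ((x.natAbs ^ 2 : ℕ) : ℂ) ^ (ν - j))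
        = ∑ j ∈ Finset.range (ν + 1), (-1 : ℂ) ^ j * ((2 * ν - j).choose j : ℂ) * (n : ℂ) ^ j *
            (x : ℂ) ^ (2 * ν - 2 * j) from by
      refine Finset.sum_congr rfl fun j hj => ?_
      have hjν : j ≤ ν := by simpa [Nat.lt_succ_iff] using hj
      rw [hX, ← pow_mul]
      congr 2
      omega]
    ring
  rw [Finset.sum_congr rfl step4, ← Finset.mul_sum]
end
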